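/- Let F : (Fin n → ZMod 2) → (Fin n → ZMod 2) be an S-box with coordinate functions f_i x = F x i such that for all j ≠ k in Fin n the Boolean function f_j + f_k satisfies the strict avalanche criterion. Let σ, τ : Equiv.Perm (Fin n) be permutations and let G be the clone S-box G x i = F (fun j => x (σ j)) (τ i) with coordinate functions g_i x = G x i. Then for all j ≠ k in Fin n, the Boolean function g_j + g_k satisfies the strict avalanche criterion. -/

import Mathlib

/-- A Boolean function of `n` inputs is balanced if it takes the value 1 on
exactly `2^(n-1)` inputs. -/
def BalancedBF (n : ℕ) (f : (Fin n → ZMod 2) → ZMod 2) : Prop :=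
  (Finset.univ.filter (fun x : Fin n → ZMod 2 => f x = 1)).card = 2 ^ (n - 1)

/-- An affine Boolean function of `n` inputs. -/
def IsAffineBF (n : ℕ) (l : (Fin n → ZMod 2) → ZMod 2) : Prop :=
  ∃ (a : Fin n → ZMod 2) (c : ZMod 2), ∀ x, l x = (∑ i, a i * x i) + c

/-- Hamming distance between two Boolean functions. -/
def hammingDistBF (n : ℕ) (f g : (Fin n → ZMod 2) → ZMod 2) : ℕ :=
  (Finset.univ.filter (fun x : Fin n → ZMod 2 => f x ≠ g x)).card

/-- The nonlinearity of a Boolean function: the minimal Hamming distance to an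
affine Boolean function. -/
noncomputable def nonlinearity (n : ℕ) (f : (Fin n → ZMod 2) → ZMod 2) : ℕ :=
  sInf {d | ∃ l, IsAffineBF n l ∧ d = hammingDistBF n f l}

/-- The standard basis vector `e i`. -/
def stdBasis (n : ℕ) (i : Fin n) : Fin n → ZMod 2 :=
  fun j => if j = i then 1 else 0

/-- The strict avalanche criterion. -/
def SAC (n : ℕ) (f : (Fin n → ZMod 2) → ZMod 2) : Prop :=
  ∀ i : Fin n, BalancedBF n (fun x => f x + f (x + stdBasis n i))

theorem clone_sbox_bic_sac
    (n : ℕ) (hn : 0 < n)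
    (F : (Fin n → ZMod 2) → (Fin n → ZMod 2))
    (hF : ∀ j k : Fin n, j ≠ k → SAC n (fun x => F x j + F x k))
    (σ τ : Equiv.Perm (Fin n))
    (G : (Fin n → ZMod 2) → (Fin n → ZMod 2))
    (hG : ∀ x i, G x i = F (fun j => x (σ j)) (τ i)) :
    ∀ j k : Fin n, j ≠ k → SAC n (fun x => G x j + G x k) := by
  intro j k hjk i
  have hτ : τ j ≠ τ k := fun h => hjk (τ.injective h)
  have h := hF (τ j) (τ k) hτ (σ⁻¹ i)
  unfold BalancedBF at h ⊢
  rw [← h]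
  have key : ∀ (x : Fin n → ZMod 2),
      (fun l => (x + stdBasis n i) (σ l)) = (fun l => x (σ l)) + stdBasis n (σ⁻¹ i) := by
    intro x
    funext l
    simp only [Pi.add_apply, stdBasis]
    congr 1
    have : σ l = i ↔ l = σ⁻¹ i := by
      constructor
      · intro h; simp [← h]
      · intro h; simp [h]
    by_cases hc : σ l = i
    · rw [if_pos hc, if_pos (this.mp hc)]
    · rw [if_neg hc, if_neg (fun hl => hc (this.mpr hl))]
  apply Finset.card_bij (fun x _ => fun l => x (σ l))
  · intro x hx
    simp only [Finset.mem_filter, Finset.mem_univ, true_and] at hx ⊢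
    rw [hG, hG, hG, hG] at hx
    rw [key x] at hx
    convert hx using 2
  · intro x hx y hy hxy
    funext l
    have := congrFun hxy (σ⁻¹ l)
    simpa using this
  · intro y hy
    refine ⟨fun l => y (σ⁻¹ l), ?_, ?_⟩
    · simp only [Finset.mem_filter, Finset.mem_univ, true_and] at hy ⊢
      rw [hG, hG, hG, hG, key]
      have hyy : (fun l => (fun l => y (σ⁻¹ l)) (σ l)) = y := by
        funext l; exact congrArg y (σ.symm_apply_apply l)
      rw [hyy]
      convert hy using 2
    · funext l; exact congrArg y (σ.symm_apply_apply l)
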